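/- Let A be an n×n complex matrix with eigenvalues λ₁, …, λₙ (with multiplicity) and let p ≥ 1. Then Σᵢ |λᵢ|^p ≤ (rank A)^(1/2) · ‖A‖_{2p}^p. -/

import Mathlib

section SchurAux
open Module Finset Polynomial

local notation "⟪" x ", " y "⟫" => @inner ℂ _ _ x y



theorem exists_schur_basis : ∀ (m : ℕ) (E : Type) [NormedAddCommGroup E]
    [InnerProductSpace ℂ E] [FiniteDimensional ℂ E], finrank ℂ E = m →
    ∀ f : E →ₗ[ℂ] E, ∃ u : OrthonormalBasis (Fin m) ℂ E,
      ∀ i j : Fin m, i < j → ⟪u j, f (u i)⟫ = 0 := by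
  intro m
  induction m with
  | zero =>
    intro E _ _ _ h f
    have : Subsingleton E := finrank_zero_iff.mp h
    refine ⟨(Basis.empty E).toOrthonormalBasis ?_, fun i => i.elim0⟩
    constructor
    · simp [Subsingleton.elim _ (0:E)]
    · intro i; exact i.elim0
  | succ m ih =>
    intro E _ _ _ h f
    have : Nontrivial E := finrank_pos_iff.mp (by rw [h]; omega)
    obtain ⟨μ, hμ⟩ := Module.End.exists_eigenvalue f
    obtain ⟨v₀, hv₀⟩ := hμ.exists_hasEigenvector
    have hv0 : v₀ ≠ 0 := hv₀.right
    set v : E := ((‖v₀‖⁻¹ : ℝ) : ℂ) • v₀ with hvdef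
    have hnv : ‖v‖ = 1 := by
      rw [hvdef, norm_smul]
      simp [norm_ne_zero_iff.mpr hv0, inv_mul_cancel₀]
    have hvne : v ≠ 0 := by
      intro hc; rw [hc] at hnv; simp at hnv
    have hfv : f v = μ • v := by
      rw [hvdef, map_smul, hv₀.apply_eq_smul, smul_comm]
    set K : Submodule ℂ E := (ℂ ∙ v)ᗮ with hK
    have : Fact (finrank ℂ E = m + 1) := ⟨h⟩
    have hfrK : finrank ℂ K = m := Submodule.finrank_orthogonal_span_singleton hvne
    set g : K →ₗ[ℂ] K :=
      K.orthogonalProjectionOnto.toLinearMap.comp (f.comp K.subtype) with hg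
    obtain ⟨u', hu'⟩ := ih K hfrK g
    set w : Fin (m + 1) → E := Fin.cons v (fun i => (u' i : E)) with hw
    have hmemK : ∀ i, (u' i : E) ∈ K := fun i => (u' i).2
    have hvK : ∀ x ∈ K, ⟪v, x⟫ = 0 := by
      intro x hx
      exact (Submodule.mem_orthogonal _ _).mp hx v (Submodule.mem_span_singleton_self v)
    have hKv : ∀ x ∈ K, ⟪x, v⟫ = 0 := by
      intro x hx
      rw [← inner_conj_symm, hvK x hx, map_zero]
    have hworth : Orthonormal ℂ w := by
      rw [orthonormal_iff_ite]
      intro i j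
      refine Fin.cases ?_ (fun i' => ?_) i
      · refine Fin.cases ?_ (fun j' => ?_) j
        · simp [hw, inner_self_eq_norm_sq_to_K, hnv]
        · simp only [hw, Fin.cons_zero, Fin.cons_succ]
          rw [hvK _ (hmemK j')]
          simp [(Fin.succ_ne_zero j').symm]
      · refine Fin.cases ?_ (fun j' => ?_) j
        · simp only [hw, Fin.cons_zero, Fin.cons_succ]
          rw [hKv _ (hmemK i')]
          simp [Fin.succ_ne_zero i']
        · simp only [hw, Fin.cons_succ]
          rw [← Submodule.coe_inner, orthonormal_iff_ite.mp u'.orthonormal i' j']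
          simp [Fin.succ_inj]
    have hcard : Fintype.card (Fin (m + 1)) = finrank ℂ E := by simp [h]
    have hli := hworth.linearIndependent
    set b := basisOfLinearIndependentOfCardEqFinrank hli hcard with hb
    have hbw : ⇑b = w := coe_basisOfLinearIndependentOfCardEqFinrank hli hcard
    refine ⟨b.toOrthonormalBasis (by rwa [hbw]), ?_⟩
    have hcoe : ∀ i, (b.toOrthonormalBasis (by rwa [hbw])) i = w i := by
      intro i; rw [Basis.coe_toOrthonormalBasis, hbw]
    intro i j hij
    rw [hcoe, hcoe]
    refine Fin.cases ?_ (fun i' => ?_) i hij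
    · refine Fin.cases ?_ (fun j' => ?_) j
      · intro hc; exact absurd hc (lt_irrefl _)
      · intro _
        simp only [hw, Fin.cons_zero, Fin.cons_succ]
        rw [hfv, inner_smul_right, hKv _ (hmemK j'), mul_zero]
    · refine Fin.cases ?_ (fun j' => ?_) j
      · intro hc; exact absurd hc (Fin.not_lt_zero _)
      · intro hij'
        simp only [hw, Fin.cons_succ]
        have h1 : ⟪(u' j' : E), f (u' i' : E)⟫ = ⟪u' j', g (u' i')⟫ := by
          rw [hg]
          simp only [LinearMap.coe_comp, Function.comp_apply, ContinuousLinearMap.coe_coe,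
            Submodule.coe_subtype]
          rw [Submodule.inner_orthogonalProjectionOnto_eq_of_mem_left]
        rw [h1, hu' i' j' (by simpa [Fin.succ_lt_succ_iff] using hij')]
theorem exists_schur_data (n : ℕ) (A : Matrix (Fin n) (Fin n) ℂ) :
    ∃ (u : OrthonormalBasis (Fin n) ℂ (EuclideanSpace ℂ (Fin n))) (lam : Fin n → ℂ),
      (∀ i, lam i = ⟪u i, Matrix.toEuclideanLin A (u i)⟫) ∧
      A.charpoly.roots = Multiset.map lam Finset.univ.val ∧
      ((Finset.univ.filter (fun i => lam i ≠ 0)).card : ℕ) ≤ A.rank := by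
  have hfr : finrank ℂ (EuclideanSpace ℂ (Fin n)) = n := by simp
  obtain ⟨u, hu⟩ := exists_schur_basis n (EuclideanSpace ℂ (Fin n)) hfr (Matrix.toEuclideanLin A)
  set f := Matrix.toEuclideanLin A with hf
  set T := LinearMap.toMatrix u.toBasis u.toBasis f with hT
  set lam : Fin n → ℂ := fun i => T i i with hlam
  have hTij : ∀ i j, T i j = ⟪u i, f (u j)⟫ := by
    intro i j
    rw [hT, LinearMap.toMatrix_apply, OrthonormalBasis.coe_toBasis_repr_apply,
      OrthonormalBasis.repr_apply_apply, OrthonormalBasis.coe_toBasis]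
  have hTtri : T.BlockTriangular id := by
    intro i j hji
    rw [hTij]
    exact hu j i hji
  have hcpT : A.charpoly = T.charpoly := by
    rw [hT, LinearMap.charpoly_toMatrix]
    conv_lhs => rw [show A = LinearMap.toMatrix (PiLp.basisFun 2 ℂ (Fin n))
      (PiLp.basisFun 2 ℂ (Fin n)) f by
        rw [hf, Matrix.toEuclideanLin_eq_toLin, LinearMap.toMatrix_toLin]]
    rw [LinearMap.charpoly_toMatrix]
  have hroots : A.charpoly.roots = Multiset.map lam Finset.univ.val := by
    rw [hcpT, Matrix.charpoly_of_upperTriangular T hTtri]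
    have : ∏ i : Fin n, (X - C (T i i)) =
        (Multiset.map (fun a => X - C a) (Multiset.map lam Finset.univ.val)).prod := by
      rw [Multiset.map_map]
      rfl
    rw [this, Polynomial.roots_multiset_prod_X_sub_C]
  refine ⟨u, lam, fun i => hTij i i, hroots, ?_⟩
  -- rank bound
  have hrank : A.rank = T.rank := by
    have e1 : (Matrix.toLin (PiLp.basisFun 2 ℂ (Fin n)) (PiLp.basisFun 2 ℂ (Fin n))) A = f := by
      rw [hf, Matrix.toEuclideanLin_eq_toLin]
    have e2 : (Matrix.toLin u.toBasis u.toBasis) T = f := by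
      rw [hT, Matrix.toLin_toMatrix]
    rw [Matrix.rank_eq_finrank_range_toLin A (PiLp.basisFun 2 ℂ (Fin n))
      (PiLp.basisFun 2 ℂ (Fin n)),
      Matrix.rank_eq_finrank_range_toLin T u.toBasis u.toBasis, e1, e2]
  set S : Finset (Fin n) := Finset.univ.filter (fun i => lam i ≠ 0) with hS
  set k := S.card with hk
  set e : Fin k ≃o S := S.orderIsoOfFin rfl with he
  set g : Fin k → Fin n := fun i => (e i : Fin n) with hg
  set M := T.submatrix g g with hM
  have hMtri : M.BlockTriangular id := by
    intro i j hji
    exact hTtri (show (g j : Fin n) < g i from Subtype.coe_lt_coe.mpr (e.lt_iff_lt.mpr hji))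
  have hdet : IsUnit M.det := by
    rw [Matrix.det_of_upperTriangular hMtri]
    refine isUnit_iff_ne_zero.mpr (Finset.prod_ne_zero_iff.mpr fun i _ => ?_)
    exact (Finset.mem_filter.mp (e i).2).2
  have hMrank : M.rank = k := by
    rw [Matrix.rank_of_isUnit M ((Matrix.isUnit_iff_isUnit_det M).mpr hdet), Fintype.card_fin]
  have hfact : M = ((1 : Matrix (Fin n) (Fin n) ℂ).submatrix g _root_.id) * T *
      ((1 : Matrix (Fin n) (Fin n) ℂ).submatrix _root_.id g) := by
    ext i j
    simp [hM, Matrix.mul_apply, Matrix.submatrix_apply, Matrix.one_apply]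
  have : M.rank ≤ T.rank := by
    rw [hfact]
    exact le_trans (Matrix.rank_mul_le_left _ _)
      (Matrix.rank_mul_le_right _ _)
  omega

theorem exists_svd (n : ℕ) (A : Matrix (Fin n) (Fin n) ℂ) :
    ∃ V : OrthonormalBasis (Fin n) ℂ (EuclideanSpace ℂ (Fin n)),
      ∀ j, Matrix.toEuclideanLin A ((Matrix.isHermitian_conjTranspose_mul_self A).eigenvectorBasis j) =
        ((Real.sqrt ((Matrix.isHermitian_conjTranspose_mul_self A).eigenvalues j) : ℝ) : ℂ) • V j := by
  set hH := Matrix.isHermitian_conjTranspose_mul_self A with hHdef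
  set W := hH.eigenvectorBasis with hW
  set μ : Fin n → ℝ := hH.eigenvalues with hμ
  have hμ0 : ∀ j, 0 ≤ μ j := fun j => Matrix.eigenvalues_conjTranspose_mul_self_nonneg A j
  set s : Fin n → ℝ := fun j => Real.sqrt (μ j) with hs
  have hs2 : ∀ j, s j ^ 2 = μ j := fun j => Real.sq_sqrt (hμ0 j)
  set f := Matrix.toEuclideanLin A with hf
  have key : ∀ (x : EuclideanSpace ℂ (Fin n)) (k : Fin n),
      ⟪f x, f (W k)⟫ = ((μ k : ℝ) : ℂ) * ⟪x, W k⟫ := by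
    intro x k
    rw [hf, Matrix.toEuclideanLin_apply, Matrix.toEuclideanLin_apply,
      EuclideanSpace.inner_eq_star_dotProduct, EuclideanSpace.inner_eq_star_dotProduct]
    simp only [Equiv.apply_symm_apply]
    rw [Matrix.star_mulVec, dotProduct_comm, ← Matrix.dotProduct_mulVec, Matrix.mulVec_mulVec]
    rw [hH.mulVec_eigenvectorBasis k]
    rw [dotProduct_smul]
    simp [smul_dotProduct, RCLike.real_smul_eq_coe_mul, dotProduct_comm]
    rfl
  set S' : Set (Fin n) := {j | s j ≠ 0} with hS'
  set v : Fin n → EuclideanSpace ℂ (Fin n) := fun j => (((s j)⁻¹ : ℝ) : ℂ) • f (W j) with hv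
  have horth : Orthonormal ℂ (S'.restrict v) := by
    rw [orthonormal_iff_ite]
    intro ⟨j, hj⟩ ⟨k, hk⟩
    simp only [Set.restrict_apply, hv]
    dsimp only [Set.restrict, Set.domRestrict]
    rw [inner_smul_left, inner_smul_right, key]
    rw [orthonormal_iff_ite.mp W.orthonormal j k]
    by_cases hjk : j = k
    · subst hjk
      have hne : s j ≠ 0 := hj
      have hμj : μ j ≠ 0 := by
        intro hc
        exact hne (by rw [hs]; simp [hc])
      have hr : ((s j)⁻¹ * ((s j)⁻¹ * μ j) : ℝ) = 1 := by
        rw [← hs2 j]; field_simp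
      rw [Complex.conj_ofReal]
      simp only [if_pos rfl, Subtype.mk.injEq, mul_one, ite_true]
      exact_mod_cast hr
    · simp [hjk, Subtype.mk.injEq]
  have hcard : finrank ℂ (EuclideanSpace ℂ (Fin n)) = Fintype.card (Fin n) := by simp
  obtain ⟨V, hV⟩ := horth.exists_orthonormalBasis_extension_of_card_eq hcard
  refine ⟨V, fun j => ?_⟩
  by_cases hj : j ∈ S'
  · rw [hV j hj, hv]
    rw [smul_smul, ← Complex.ofReal_mul, mul_inv_cancel₀ (by exact hj : s j ≠ 0)]
    simp
  · have hsj : s j = 0 := by simpa [hS'] using hj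
    have hμj : μ j = 0 := by rw [← hs2 j, hsj]; ring
    have : f (W j) = 0 := by
      rw [← inner_self_eq_zero (𝕜 := ℂ), key, hμj]
      simp
    rw [this, hμj]
    simp
theorem parseval_abs_sq (n : ℕ) (B : OrthonormalBasis (Fin n) ℂ (EuclideanSpace ℂ (Fin n)))
    (x : EuclideanSpace ℂ (Fin n)) (hx : ‖x‖ = 1) :
    ∑ j, ‖⟪B j, x⟫‖ ^ 2 = 1 := by
  have h := B.sum_inner_mul_inner x x
  have h2 : ⟪x, x⟫ = 1 := by
    rw [inner_self_eq_norm_sq_to_K (𝕜 := ℂ), hx]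
    norm_num
  rw [h2] at h
  have h3 : ∀ j, ⟪x, B j⟫ * ⟪B j, x⟫ = ((‖⟪B j, x⟫‖ ^ 2 : ℝ) : ℂ) := by
    intro j
    have hz : ⟪x, B j⟫ = (starRingEnd ℂ) ⟪B j, x⟫ := (inner_conj_symm _ _).symm
    rw [hz, mul_comm, Complex.mul_conj, Complex.sq_norm]
  rw [Finset.sum_congr rfl (fun j _ => h3 j)] at h
  exact_mod_cast h

theorem weyl_rpow_sum (n : ℕ) (A : Matrix (Fin n) (Fin n) ℂ) (q : ℝ) (hq : 1 ≤ q)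
    (u : OrthonormalBasis (Fin n) ℂ (EuclideanSpace ℂ (Fin n))) (lam : Fin n → ℂ)
    (hlam : ∀ i, lam i = ⟪u i, Matrix.toEuclideanLin A (u i)⟫) :
    ∑ i, ‖(lam i)‖ ^ q ≤
      ∑ j, Real.sqrt ((Matrix.isHermitian_conjTranspose_mul_self A).eigenvalues j) ^ q := by
  obtain ⟨V, hV⟩ := exists_svd n A
  set hH := Matrix.isHermitian_conjTranspose_mul_self A with hHdef
  set W := hH.eigenvectorBasis with hWdef
  set s : Fin n → ℝ := fun j => Real.sqrt (hH.eigenvalues j) with hs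
  have hs0 : ∀ j, 0 ≤ s j := fun j => Real.sqrt_nonneg _
  set f := Matrix.toEuclideanLin A with hf
  set a : Fin n → Fin n → ℝ := fun i j => ‖⟪W j, u i⟫‖ with ha
  set b : Fin n → Fin n → ℝ := fun i j => ‖⟪u i, V j⟫‖ with hb
  set d : Fin n → Fin n → ℝ := fun i j => (a i j ^ 2 + b i j ^ 2) / 2 with hd
  have hd0 : ∀ i j, 0 ≤ d i j := by
    intro i j; rw [hd]; positivity
  -- expansion of lam
  have hexp : ∀ i, lam i = ∑ j, ⟪W j, u i⟫ * ((s j : ℝ) : ℂ) * ⟪u i, V j⟫ := by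
    intro i
    have hfu : f (u i) = ∑ j, W.repr (u i) j • ((((s j : ℝ)) : ℂ) • V j) := by
      conv_lhs => rw [← W.sum_repr (u i)]
      rw [map_sum]
      exact Finset.sum_congr rfl fun j _ => by rw [map_smul, hV j]
    rw [hlam i, hfu, inner_sum]
    refine Finset.sum_congr rfl fun j _ => ?_
    rw [inner_smul_right, inner_smul_right, W.repr_apply_apply]
    ring
  -- bound on abs lam
  have habs : ∀ i, ‖(lam i)‖ ≤ ∑ j, d i j * s j := by
    intro i
    rw [hexp i]
    refine le_trans (norm_sum_le _ _) (Finset.sum_le_sum fun j _ => ?_)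
    rw [norm_mul, norm_mul, Complex.norm_real, Real.norm_of_nonneg (hs0 j)]
    have hab : a i j * b i j ≤ d i j := by
      rw [hd]
      nlinarith [sq_nonneg (a i j - b i j)]
    calc ‖⟪W j, u i⟫‖ * s j * ‖⟪u i, V j⟫‖
        = (a i j * b i j) * s j := by rw [ha, hb]; ring
      _ ≤ d i j * s j := mul_le_mul_of_nonneg_right hab (hs0 j)
  -- row sums of d are 1
  have hrow : ∀ i, ∑ j, d i j = 1 := by
    intro i
    have h1 : ∑ j, a i j ^ 2 = 1 := parseval_abs_sq n W (u i) (u.orthonormal.1 i)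
    have h2 : ∑ j, b i j ^ 2 = 1 := by
      have : ∀ j, b i j = ‖⟪V j, u i⟫‖ := by
        intro j
        rw [hb]
        simp only []
        rw [norm_inner_symm]
      rw [Finset.sum_congr rfl fun j _ => by rw [this j]]
      exact parseval_abs_sq n V (u i) (u.orthonormal.1 i)
    rw [hd]
    simp only []
    rw [← Finset.sum_div, Finset.sum_add_distrib, h1, h2]
    norm_num
  -- column sums of d are 1
  have hcol : ∀ j, ∑ i, d i j = 1 := by
    intro j
    have h1 : ∑ i, a i j ^ 2 = 1 := by
      have : ∀ i, a i j = ‖⟪u i, W j⟫‖ := by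
        intro i
        rw [ha]
        simp only []
        rw [norm_inner_symm]
      rw [Finset.sum_congr rfl fun i _ => by rw [this i]]
      exact parseval_abs_sq n u (W j) (W.orthonormal.1 j)
    have h2 : ∑ i, b i j ^ 2 = 1 := parseval_abs_sq n u (V j) (V.orthonormal.1 j)
    rw [hd]
    simp only []
    rw [← Finset.sum_div, Finset.sum_add_distrib, h1, h2]
    norm_num
  -- Jensen
  have hjensen : ∀ i, (∑ j, d i j * s j) ^ q ≤ ∑ j, d i j * s j ^ q := by
    intro i
    have := (convexOn_rpow hq).map_sum_le (t := Finset.univ) (w := d i) (p := s)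
      (fun j _ => hd0 i j) (hrow i) (fun j _ => Set.mem_Ici.mpr (hs0 j))
    simpa [smul_eq_mul] using this
  calc ∑ i, ‖(lam i)‖ ^ q
      ≤ ∑ i, (∑ j, d i j * s j) ^ q := by
        refine Finset.sum_le_sum fun i _ => ?_
        exact Real.rpow_le_rpow (norm_nonneg _) (habs i) (by linarith)
    _ ≤ ∑ i, ∑ j, d i j * s j ^ q := Finset.sum_le_sum fun i _ => hjensen i
    _ = ∑ j, (∑ i, d i j) * s j ^ q := by
        rw [Finset.sum_comm]
        exact Finset.sum_congr rfl fun j _ => by rw [Finset.sum_mul]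
    _ = ∑ j, s j ^ q := Finset.sum_congr rfl fun j _ => by rw [hcol j, one_mul]

end SchurAux

open Matrix

/-- Singular values of a complex square matrix: the square roots of the
eigenvalues of `Aᴴ * A` (i.e. the eigenvalues of `|A| = (Aᴴ A)^(1/2)`). -/
noncomputable def singVal {n : ℕ} (A : Matrix (Fin n) (Fin n) ℂ) : Fin n → ℝ :=
  fun i => Real.sqrt ((Matrix.isHermitian_conjTranspose_mul_self A).eigenvalues i)

/-- `trace |A|^p = ∑ sᵢ(A)^p`. -/
noncomputable def traceAbsPow {n : ℕ} (A : Matrix (Fin n) (Fin n) ℂ) (p : ℝ) : ℝ :=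
  ∑ i, singVal A i ^ p

/-- The Schatten `p`-norm `‖A‖_p = (trace |A|^p)^(1/p)`. -/
noncomputable def schattenNorm {n : ℕ} (A : Matrix (Fin n) (Fin n) ℂ) (p : ℝ) : ℝ :=
  traceAbsPow A p ^ (1 / p)

theorem stmt7 {n : ℕ} (A : Matrix (Fin n) (Fin n) ℂ) (p : ℝ) (hp : 1 ≤ p) :
    ((A.charpoly.roots.map fun z => ‖z‖ ^ p).sum) ≤
      (A.rank : ℝ) ^ ((1 : ℝ)/2) * schattenNorm A (2 * p) ^ p := by
  obtain ⟨u, lam, hlam, hroots, hrank⟩ := exists_schur_data n A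
  have hp0 : (0:ℝ) < p := by linarith
  have hLHS : ((A.charpoly.roots.map fun z => ‖z‖ ^ p).sum)
      = ∑ i, ‖(lam i)‖ ^ p := by
    rw [hroots, Multiset.map_map]
    rfl
  have hs0 : ∀ j, 0 ≤ singVal A j := fun j => Real.sqrt_nonneg _
  have hweyl : ∑ i, ‖(lam i)‖ ^ (2*p) ≤ ∑ j, singVal A j ^ (2*p) := by
    simpa only [singVal] using weyl_rpow_sum n A (2*p) (by linarith) u lam hlam
  set Sig2 : ℝ := ∑ j, singVal A j ^ (2*p) with hSg
  have hSg0 : 0 ≤ Sig2 := Finset.sum_nonneg fun j _ => Real.rpow_nonneg (hs0 j) _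
  set S₀ := Finset.univ.filter (fun i => lam i ≠ 0) with hS₀
  set k := S₀.card with hk
  have h1 : ∑ i, ‖(lam i)‖ ^ p = ∑ i ∈ S₀, ‖(lam i)‖ ^ p := by
    rw [hS₀]
    symm
    apply Finset.sum_filter_of_ne
    intro x _ hfx hx0
    apply hfx
    rw [hx0]
    simp [Real.zero_rpow (ne_of_gt hp0)]
  have hterm : ∀ i ∈ S₀, (‖(lam i)‖ ^ p)^2 = ‖(lam i)‖ ^ (2*p) := by
    intro i hi
    have hne : lam i ≠ 0 := (Finset.mem_filter.mp hi).2
    have habs : 0 < ‖(lam i)‖ := norm_pos_iff.mpr hne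
    rw [sq, ← Real.rpow_add habs]
    ring_nf
  have h2 : (∑ i ∈ S₀, ‖(lam i)‖ ^ p)^2 ≤ (k:ℝ) * Sig2 := by
    calc (∑ i ∈ S₀, ‖(lam i)‖ ^ p)^2
        ≤ (k:ℝ) * ∑ i ∈ S₀, (‖(lam i)‖ ^ p)^2 := sq_sum_le_card_mul_sum_sq
      _ = (k:ℝ) * ∑ i ∈ S₀, ‖(lam i)‖ ^ (2*p) := by
          rw [Finset.sum_congr rfl hterm]
      _ ≤ (k:ℝ) * ∑ i, ‖(lam i)‖ ^ (2*p) := by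
          refine mul_le_mul_of_nonneg_left ?_ (Nat.cast_nonneg k)
          refine Finset.sum_le_sum_of_subset_of_nonneg (Finset.filter_subset _ _) ?_
          intro i _ _
          exact Real.rpow_nonneg (norm_nonneg _) _
      _ ≤ (k:ℝ) * Sig2 := mul_le_mul_of_nonneg_left hweyl (Nat.cast_nonneg k)
  have hL0 : 0 ≤ ∑ i ∈ S₀, ‖(lam i)‖ ^ p :=
    Finset.sum_nonneg fun i _ => Real.rpow_nonneg (norm_nonneg _) _
  have h3 : ∑ i ∈ S₀, ‖(lam i)‖ ^ p ≤ Real.sqrt ((k:ℝ) * Sig2) := by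
    calc ∑ i ∈ S₀, ‖(lam i)‖ ^ p
        = Real.sqrt ((∑ i ∈ S₀, ‖(lam i)‖ ^ p)^2) := (Real.sqrt_sq hL0).symm
      _ ≤ Real.sqrt ((k:ℝ) * Sig2) := Real.sqrt_le_sqrt h2
  have h4 : Real.sqrt ((k:ℝ) * Sig2) = Real.sqrt (k:ℝ) * Real.sqrt Sig2 :=
    Real.sqrt_mul (Nat.cast_nonneg k) _
  have h5 : Real.sqrt (k:ℝ) ≤ Real.sqrt (A.rank : ℝ) :=
    Real.sqrt_le_sqrt (by exact_mod_cast hrank)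
  have e1 : (A.rank : ℝ) ^ ((1:ℝ)/2) = Real.sqrt (A.rank : ℝ) :=
    (Real.sqrt_eq_rpow _).symm
  have e2 : schattenNorm A (2*p) ^ p = Real.sqrt Sig2 := by
    rw [schattenNorm, traceAbsPow]
    have hcoef : (1/(2*p))*p = (1/2 : ℝ) := by field_simp
    rw [show (∑ i, singVal A i ^ (2*p)) = Sig2 from rfl, ← Real.rpow_mul hSg0, hcoef,
      Real.sqrt_eq_rpow]
  rw [hLHS, h1, e1, e2]
  exact le_trans h3 (by rw [h4]; exact mul_le_mul_of_nonneg_right h5 (Real.sqrt_nonneg _))
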